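/- arXiv:1506.07431 — 6 statements merged into one kernel-verified Lean document; each statement's English description precedes it below -/
import Mathlib

section
/- Let X be a real Banach space, A : X → X a bounded linear operator, and c ∈ ℝ a constant such that ‖A − c·I‖ < 1 + c (operator norm). Then for every t ∈ [0,1] the operator I + t²·A is invertible in the Banach algebra of bounded operators on X. -/
/-- If `A` is a bounded operator on a real Banach space `X` and `c : ℝ` satisfies
`‖A - c • I‖ < 1 + c`, then `I + t² • A` is invertible for every `t ∈ [0,1]`. -/
theorem stmt0 {X : Type*} [NormedAddCommGroup X] [NormedSpace ℝ X] [CompleteSpace X]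
    (A : X →L[ℝ] X) (c : ℝ)
    (h : ‖A - c • (1 : X →L[ℝ] X)‖ < 1 + c) :
    ∀ t ∈ Set.Icc (0 : ℝ) 1, IsUnit ((1 : X →L[ℝ] X) + t ^ 2 • A) := by
  have hc : 0 < 1 + c := lt_of_le_of_lt (norm_nonneg _) h
  rintro t ⟨ht0, ht1⟩
  have ht2 : t ^ 2 ≤ 1 := by nlinarith
  have ht2' : 0 ≤ t ^ 2 := sq_nonneg t
  have hd : 0 < 1 + c * t ^ 2 := by
    rcases le_or_gt c 0 with h1 | h1
    · nlinarith
    · nlinarith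
  set B := A - c • (1 : X →L[ℝ] X) with hB
  set s : ℝ := t ^ 2 / (1 + c * t ^ 2) with hs
  have hs0 : 0 ≤ s := div_nonneg ht2' hd.le
  have hs1 : s * (1 + c) ≤ 1 := by
    rw [hs, div_mul_eq_mul_div, div_le_one hd]
    nlinarith
  have hnorm : ‖s • B‖ < 1 := by
    rw [norm_smul s B, Real.norm_of_nonneg hs0]
    rcases eq_or_lt_of_le hs0 with h0 | h0
    · simp [← h0]
    · calc s * ‖B‖ < s * (1 + c) := by exact mul_lt_mul_of_pos_left h h0
        _ ≤ 1 := hs1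
  have hu : IsUnit ((1 : X →L[ℝ] X) + s • B) := by
    have := (Units.oneSub (-(s • B)) (by simpa using hnorm)).isUnit
    simpa [sub_neg_eq_add] using this
  have key : (1 : X →L[ℝ] X) + t ^ 2 • A = (1 + c * t ^ 2) • ((1 : X →L[ℝ] X) + s • B) := by
    have hst : (1 + c * t ^ 2) * s = t ^ 2 := by
      rw [hs]
      field_simp [hd.ne']
    rw [hB, smul_add, smul_smul, hst, smul_sub, smul_smul]
    module
  rw [key, Algebra.smul_def]
  exact (IsUnit.map (algebraMap ℝ (X →L[ℝ] X)) (isUnit_iff_ne_zero.mpr hd.ne')).mul hu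
end

section
/- Let W be a finite-dimensional real vector space and B₁, B₂ symmetric bilinear forms on W. Suppose that every subspace of W on which B₁ is negative definite has dimension at most m₁, and every subspace on which B₂ is negative definite has dimension at most m₂. Then every subspace of W on which B₁ + B₂ is negative definite has dimension at most m₁ + m₂. -/
/-- If every subspace on which the symmetric bilinear form `B₁` is negative definite has
dimension at most `m₁`, and similarly for `B₂` with `m₂`, then every subspace on which
`B₁ + B₂` is negative definite has dimension at most `m₁ + m₂`. -/
theorem stmt1 {W : Type*} [AddCommGroup W] [Module ℝ W] [FiniteDimensional ℝ W]
    (B₁ B₂ : W →ₗ[ℝ] W →ₗ[ℝ] ℝ)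
    (hB₁ : ∀ x y, B₁ x y = B₁ y x) (hB₂ : ∀ x y, B₂ x y = B₂ y x)
    (m₁ m₂ : ℕ)
    (h₁ : ∀ V : Submodule ℝ W, (∀ x ∈ V, x ≠ 0 → B₁ x x < 0) → Module.finrank ℝ V ≤ m₁)
    (h₂ : ∀ V : Submodule ℝ W, (∀ x ∈ V, x ≠ 0 → B₂ x x < 0) → Module.finrank ℝ V ≤ m₂) :
    ∀ V : Submodule ℝ W, (∀ x ∈ V, x ≠ 0 → (B₁ + B₂) x x < 0) →
      Module.finrank ℝ V ≤ m₁ + m₂ := by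
  intro V hV
  set B₁' : LinearMap.BilinForm ℝ V := B₁.compl₁₂ V.subtype V.subtype with hB₁'def
  have hsymm : B₁'.IsSymm := LinearMap.BilinForm.isSymm_def.mpr fun x y => by
    simp [hB₁'def, LinearMap.compl₁₂_apply, hB₁]
  obtain ⟨b, hb⟩ := LinearMap.BilinForm.exists_orthogonal_basis (LinearMap.BilinForm.isSymm_iff.mp hsymm)
  -- key computation
  have key : ∀ x : V, B₁' x x = ∑ i, (b.repr x i)^2 * B₁' (b i) (b i) := by
    intro x
    conv_lhs => rw [← b.sum_equivFun x]
    rw [map_sum]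
    refine Finset.sum_congr rfl fun i _ => ?_
    rw [map_sum, LinearMap.sum_apply, Finset.sum_eq_single i]
    · simp [Module.Basis.equivFun_apply]; ring
    · intro j _ hj
      have h0 : B₁' (b j) (b i) = 0 := hb hj
      simp [h0]
    · simp
  classical
  set I : Set (Fin (Module.finrank ℝ V)) := {i | B₁' (b i) (b i) < 0} with hIdef
  set S₁ : Submodule ℝ V := Submodule.span ℝ (b '' I) with hS₁def
  set S₂ : Submodule ℝ V := Submodule.span ℝ (b '' Iᶜ) with hS₂def
  have hcoe : ∀ x : V, B₁' x x = B₁ (x : W) (x : W) := by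
    intro x; simp [hB₁'def]
  have hm₁ : Module.finrank ℝ (S₁.map V.subtype) ≤ m₁ := by
    apply h₁
    rintro y hy hy0
    obtain ⟨x, hx, rfl⟩ := Submodule.mem_map.mp hy
    have hx0 : x ≠ 0 := by
      intro h; apply hy0; simp [h]
    rw [Submodule.coe_subtype, ← hcoe, key]
    have hsupp : ↑(b.repr x).support ⊆ I := b.mem_span_image.mp hx
    obtain ⟨i, hi⟩ : ∃ i, b.repr x i ≠ 0 := by
      by_contra h
      push_neg at h
      apply hx0
      have h0 : b.repr x = 0 := Finsupp.ext h
      simpa using congrArg b.repr.symm h0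
    have hiI : i ∈ I := hsupp (Finsupp.mem_support_iff.mpr hi)
    have := Finset.sum_lt_sum (f := fun j => (b.repr x j)^2 * B₁' (b j) (b j))
      (g := fun _ => (0:ℝ)) (s := Finset.univ) ?_ ⟨i, Finset.mem_univ i, ?_⟩
    · simpa using this
    · intro j _
      rcases eq_or_ne (b.repr x j) 0 with h|h
      · simp [h]
      · have hjI : j ∈ I := hsupp (Finsupp.mem_support_iff.mpr h)
        have hd : B₁' (b j) (b j) < 0 := hjI
        exact mul_nonpos_of_nonneg_of_nonpos (sq_nonneg _) hd.le
    · have hd : B₁' (b i) (b i) < 0 := hiI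
      have hsq : (0:ℝ) < (b.repr x i)^2 := by positivity
      exact mul_neg_of_pos_of_neg hsq hd
  have hm₂ : Module.finrank ℝ (S₂.map V.subtype) ≤ m₂ := by
    apply h₂
    rintro y hy hy0
    obtain ⟨x, hx, rfl⟩ := Submodule.mem_map.mp hy
    have hpos : 0 ≤ B₁' x x := by
      rw [key]
      apply Finset.sum_nonneg
      intro j _
      rcases eq_or_ne (b.repr x j) 0 with h|h
      · simp [h]
      · have hjI : j ∈ Iᶜ := b.mem_span_image.mp hx (Finsupp.mem_support_iff.mpr h)
        have hd : 0 ≤ B₁' (b j) (b j) := not_lt.mp hjI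
        positivity
    have hneg := hV (x : W) x.2 (by simpa using hy0)
    rw [hcoe] at hpos
    simp only [LinearMap.add_apply] at hneg
    rw [Submodule.coe_subtype]
    linarith
  have htop : S₁ ⊔ S₂ = ⊤ := by
    rw [hS₁def, hS₂def, ← Submodule.span_union, ← Set.image_union, Set.union_compl_self,
      Set.image_univ, b.span_eq]
  have hsum := Submodule.finrank_sup_add_finrank_inf_eq S₁ S₂
  have e₁ : Module.finrank ℝ (S₁.map V.subtype) = Module.finrank ℝ S₁ :=
    Submodule.finrank_map_subtype_eq V S₁
  have e₂ : Module.finrank ℝ (S₂.map V.subtype) = Module.finrank ℝ S₂ :=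
    Submodule.finrank_map_subtype_eq V S₂
  have : Module.finrank ℝ V = Module.finrank ℝ (S₁ ⊔ S₂ : Submodule ℝ V) := by
    rw [htop, finrank_top]
  omega
end

section
/- Let W be a finite-dimensional real vector space and B₁, B₂ symmetric bilinear forms on W. Suppose that every subspace of W on which B₁ is negative semidefinite (i.e. B₁(x,x) ≤ 0 for all x in the subspace) has dimension at most m₁, and every subspace on which B₂ is negative semidefinite has dimension at most m₂. Then every subspace of W on which B₁ + B₂ is negative semidefinite has dimension at most m₁ + m₂. -/
/-- For an orthogonal family `b`, the quadratic value of an element of the span of `b '' s`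
is nonnegative provided the diagonal values on `s` are nonnegative. -/
lemma aux_diag_nonneg {V : Type*} [AddCommGroup V] [Module ℝ V] {n : Type*}
    (B : LinearMap.BilinForm ℝ V) (b : Module.Basis n ℝ V) (hb : B.iIsOrtho b) (s : Set n)
    {x : V} (hx : x ∈ Submodule.span ℝ (b '' s))
    (hs : ∀ i ∈ s, 0 ≤ B (b i) (b i)) : 0 ≤ B x x := by
  rw [← LinearMap.BilinForm.sum_repr_mul_repr_mul b x x]
  have hsupp : ↑(b.repr x).support ⊆ s := b.repr_support_subset_of_mem_span s hx
  apply Finset.sum_nonneg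
  intro i hi
  apply Finset.sum_nonneg
  intro j hj
  rcases eq_or_ne i j with rfl | hij
  · have hBi : 0 ≤ B (b i) (b i) := hs i (hsupp hi)
    simpa [smul_eq_mul, mul_assoc] using
      mul_nonneg (mul_self_nonneg ((b.repr x) i)) hBi
  · simp [LinearMap.BilinForm.iIsOrtho_def.1 hb i j hij]

/-- Nonpositive version. -/
lemma aux_diag_nonpos {V : Type*} [AddCommGroup V] [Module ℝ V] {n : Type*}
    (B : LinearMap.BilinForm ℝ V) (b : Module.Basis n ℝ V) (hb : B.iIsOrtho b) (s : Set n)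
    {x : V} (hx : x ∈ Submodule.span ℝ (b '' s))
    (hs : ∀ i ∈ s, B (b i) (b i) ≤ 0) : B x x ≤ 0 := by
  have hb' : (-B).iIsOrtho b := by
    intro i j hij
    have h := LinearMap.BilinForm.iIsOrtho_def.1 hb i j hij
    show (-B) (b i) (b j) = 0
    simp [h]
  have := aux_diag_nonneg (-B) b hb' s hx (fun i hi => by
    simpa using hs i hi)
  simpa using this

/-- If every subspace on which the symmetric bilinear form `B₁` is negative semidefinite has
dimension at most `m₁`, and similarly for `B₂` with `m₂`, then every subspace on which
`B₁ + B₂` is negative semidefinite has dimension at most `m₁ + m₂`. -/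
theorem stmt2 {W : Type*} [AddCommGroup W] [Module ℝ W] [FiniteDimensional ℝ W]
    (B₁ B₂ : W →ₗ[ℝ] W →ₗ[ℝ] ℝ)
    (hB₁ : ∀ x y, B₁ x y = B₁ y x) (hB₂ : ∀ x y, B₂ x y = B₂ y x)
    (m₁ m₂ : ℕ)
    (h₁ : ∀ V : Submodule ℝ W, (∀ x ∈ V, B₁ x x ≤ 0) → Module.finrank ℝ V ≤ m₁)
    (h₂ : ∀ V : Submodule ℝ W, (∀ x ∈ V, B₂ x x ≤ 0) → Module.finrank ℝ V ≤ m₂) :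
    ∀ V : Submodule ℝ W, (∀ x ∈ V, (B₁ + B₂) x x ≤ 0) →
      Module.finrank ℝ V ≤ m₁ + m₂ := by
  intro V hV
  -- restrict B₁ to V and diagonalize
  set B := LinearMap.BilinForm.restrict B₁ V with hBdef
  have hBsymm : LinearMap.IsSymm B := ⟨fun x y => by
    simp [hBdef, LinearMap.BilinForm.restrict_apply, hB₁]⟩
  obtain ⟨b, hb⟩ := LinearMap.BilinForm.exists_orthogonal_basis hBsymm
  set s : Set (Fin (Module.finrank ℝ V)) := {i | 0 < B (b i) (b i)} with hs
  set P : Submodule ℝ V := Submodule.span ℝ (b '' s) with hP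
  set N : Submodule ℝ V := Submodule.span ℝ (b '' sᶜ) with hN
  -- B₂ is negative semidefinite on P (viewed in W)
  have hPle : Module.finrank ℝ P ≤ m₂ := by
    rw [← Submodule.finrank_map_subtype_eq V P]
    apply h₂
    rintro x hx
    obtain ⟨y, hy, rfl⟩ := hx
    have hB1 : 0 ≤ B₁ (y : W) (y : W) := by
      have := aux_diag_nonneg B b hb s hy (fun i hi => le_of_lt hi)
      simpa [hBdef, LinearMap.BilinForm.restrict_apply] using this
    have hsum : (B₁ + B₂) (y : W) (y : W) ≤ 0 := hV _ y.2
    have h2 : B₁ (y : W) (y : W) + B₂ (y : W) (y : W) ≤ 0 := by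
      simpa using hsum
    show B₂ (y : W) (y : W) ≤ 0
    linarith
  -- B₁ is negative semidefinite on N (viewed in W)
  have hNle : Module.finrank ℝ N ≤ m₁ := by
    rw [← Submodule.finrank_map_subtype_eq V N]
    apply h₁
    rintro x hx
    obtain ⟨y, hy, rfl⟩ := hx
    have := aux_diag_nonpos B b hb sᶜ hy (fun i hi => le_of_not_gt hi)
    show B₁ (y : W) (y : W) ≤ 0
    simpa [hBdef, LinearMap.BilinForm.restrict_apply] using this
  -- P ⊔ N = ⊤
  have hsup : P ⊔ N = ⊤ := by
    rw [hP, hN, ← Submodule.span_union, ← Set.image_union, Set.union_compl_self,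
      Set.image_univ, b.span_eq]
  have := Submodule.finrank_sup_add_finrank_inf_eq P N
  have hfr : Module.finrank ℝ V = Module.finrank ℝ (⊤ : Submodule ℝ V) :=
    (finrank_top ℝ V).symm
  calc Module.finrank ℝ V = Module.finrank ℝ (P ⊔ N : Submodule ℝ V) := by rw [hsup, ← hfr]
    _ ≤ Module.finrank ℝ P + Module.finrank ℝ N := by omega
    _ ≤ m₂ + m₁ := add_le_add hPle hNle
    _ = m₁ + m₂ := by omega
end

section
/- For every t ∈ [0,1], the subspace β(t) = {(x, t·φ, t·x, φ) : x ∈ E, φ ∈ E*} is a Lagrangian subspace of (ℋ⊞, ω⊞): ω⊞ vanishes identically on β(t) × β(t), and every z ∈ ℋ⊞ satisfying ω⊞(z, w) = 0 for all w ∈ β(t) belongs to β(t). -/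
noncomputable section

/-- The symplectic form `ω` on `ℋ = E × E*`, `ω((x,φ),(y,ψ)) = ψ(x) − φ(y)`. -/
def omegaH {E : Type*} [NormedAddCommGroup E] [InnerProductSpace ℝ E]
    (p q : E × StrongDual ℝ E) : ℝ := q.2 p.1 - p.2 q.1

/-- The symplectic form `ω⊞ = ω ⊕ (−ω)` on the doubled space `ℋ⊞ = ℋ × ℋ`. -/
def omegaBp {E : Type*} [NormedAddCommGroup E] [InnerProductSpace ℝ E]
    (z w : (E × StrongDual ℝ E) × (E × StrongDual ℝ E)) : ℝ :=
  omegaH z.1 w.1 - omegaH z.2 w.2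

/-- The family of boundary-condition subspaces `β(t) = {(x, t·φ, t·x, φ)}` of `ℋ⊞`. -/
def betaSet (E : Type*) [NormedAddCommGroup E] [InnerProductSpace ℝ E] (t : ℝ) :
    Set ((E × StrongDual ℝ E) × (E × StrongDual ℝ E)) :=
  {z | ∃ (x : E) (φ : StrongDual ℝ E), z = ((x, t • φ), (t • x, φ))}

/-- For every `t ∈ [0,1]`, the subspace `β(t) = {(x, t·φ, t·x, φ)}` is a Lagrangian
subspace of `(ℋ⊞, ω⊞)`: it is isotropic and coisotropic. -/
theorem stmt4 {E : Type*} [NormedAddCommGroup E] [InnerProductSpace ℝ E] [CompleteSpace E] :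
    ∀ t ∈ Set.Icc (0 : ℝ) 1,
      (∀ z ∈ betaSet E t, ∀ w ∈ betaSet E t, omegaBp z w = 0) ∧
      (∀ z : (E × StrongDual ℝ E) × (E × StrongDual ℝ E),
        (∀ w ∈ betaSet E t, omegaBp z w = 0) → z ∈ betaSet E t) := by
  intro t _
  constructor
  · rintro z ⟨x, φ, rfl⟩ w ⟨y, ψ, rfl⟩
    simp [omegaBp, omegaH]
  · rintro ⟨⟨a, α⟩, ⟨b, β⟩⟩ h
    have hφ : ∀ φ : StrongDual ℝ E, ∀ x : E,
        t * φ a - α x - (φ b - t * β x) = 0 := by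
      intro φ x
      have := h ((x, t • φ), (t • x, φ)) ⟨x, φ, rfl⟩
      simpa [omegaBp, omegaH, map_smul] using this
    have hα : ∀ x : E, α x = t * β x := by
      intro x
      have := hφ 0 x
      simp at this
      linarith
    have hb : ∀ φ : StrongDual ℝ E, φ (t • a - b) = 0 := by
      intro φ
      have := hφ φ 0
      simp at this
      simp only [map_sub, map_smul, smul_eq_mul]
      linarith
    have hba : b = t • a := by
      have h0 := hb ((innerSL ℝ) (t • a - b))
      have : t • a - b = 0 := by
        rwa [innerSL_apply_apply, inner_self_eq_zero] at h0
      exact (sub_eq_zero.mp this).symm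
    refine ⟨a, β, ?_⟩
    have hαβ : α = t • β := by
      ext x
      simp [hα x, smul_eq_mul]
    simp [hαβ, hba]
end
end

section
/- Let E be a real Hilbert space with topological dual E*, and let 𝒥 : E → E* be a bounded symmetric linear map ((𝒥x)(y) = (𝒥y)(x) for all x, y). Let x : ℝ → E be differentiable at t₀ with sin t₀ ≠ 0, and define z(t) = (x(t), −(cot t)·𝒥(x(t))) ∈ E × E* for t near t₀. Then z is differentiable at t₀ and ω(z(t₀), z′(t₀)) = (1/sin²t₀)·(𝒥(x(t₀)))(x(t₀)), where ω((x,φ),(y,ψ)) = ψ(x) − φ(y). -/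
noncomputable section

lemma hasDerivAt_cot' {t : ℝ} (hs : Real.sin t ≠ 0) :
    HasDerivAt Real.cot (-(1 / Real.sin t ^ 2)) t := by
  have h : HasDerivAt (fun s => Real.cos s / Real.sin s)
      ((-Real.sin t * Real.sin t - Real.cos t * Real.cos t) / Real.sin t ^ 2) t :=
    (Real.hasDerivAt_cos t).div (Real.hasDerivAt_sin t) hs
  have heq : (fun s => Real.cos s / Real.sin s) = Real.cot := by
    funext s; rw [Real.cot_eq_cos_div_sin]
  rw [heq] at h
  convert h using 1
  have hpy := Real.sin_sq_add_cos_sq t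
  field_simp
  nlinarith

/-- Crossing form computation along the path of Robin boundary conditions: if `x : ℝ → E`
is differentiable at `t₀`, `sin t₀ ≠ 0`, and `z(t) = (x(t), −(cot t)·𝒥(x(t)))`, then `z` is
differentiable at `t₀` and `ω(z(t₀), z′(t₀)) = (1/sin²t₀)·(𝒥(x(t₀)))(x(t₀))`. -/
theorem stmt12 {E : Type*} [NormedAddCommGroup E] [InnerProductSpace ℝ E] [CompleteSpace E]
    (J : E →L[ℝ] StrongDual ℝ E) (hJ : ∀ x y : E, J x y = J y x)
    (x : ℝ → E) (t₀ : ℝ) (hx : DifferentiableAt ℝ x t₀) (hs : Real.sin t₀ ≠ 0) :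
    DifferentiableAt ℝ
      (fun t => ((x t, -(Real.cot t • J (x t))) : E × StrongDual ℝ E)) t₀ ∧
    omegaH ((x t₀, -(Real.cot t₀ • J (x t₀))))
        (deriv (fun t => ((x t, -(Real.cot t • J (x t))) : E × StrongDual ℝ E)) t₀)
      = (1 / Real.sin t₀ ^ 2) * J (x t₀) (x t₀) := by
  set x' := deriv x t₀ with hx'
  have hxd : HasDerivAt x x' t₀ := hx.hasDerivAt
  have hJx : HasDerivAt (fun t => J (x t)) (J x') t₀ :=
    (J.hasFDerivAt.comp_hasDerivAt t₀ hxd)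
  have hcot : HasDerivAt Real.cot (-(1 / Real.sin t₀ ^ 2)) t₀ := hasDerivAt_cot' hs
  have hsmul : HasDerivAt (fun t => -(Real.cot t • J (x t)))
      (-(Real.cot t₀ • J x' + (-(1 / Real.sin t₀ ^ 2)) • J (x t₀))) t₀ :=
    (hcot.smul hJx).neg
  have hz : HasDerivAt (fun t => ((x t, -(Real.cot t • J (x t))) : E × StrongDual ℝ E))
      (x', -(Real.cot t₀ • J x' + (-(1 / Real.sin t₀ ^ 2)) • J (x t₀))) t₀ :=
    hxd.prodMk hsmul
  refine ⟨hz.differentiableAt, ?_⟩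
  rw [hz.deriv]
  simp only [omegaH, ContinuousLinearMap.neg_apply, ContinuousLinearMap.add_apply,
    ContinuousLinearMap.smul_apply, smul_eq_mul]
  rw [hJ x' (x t₀)]
  ring
end
end

section
/- Let E be a real Hilbert space with topological dual E*, let Λ₁ : E → E* be an invertible bounded linear map (a continuous linear equivalence), let Λ₂ : E → E* be bounded, and suppose there is a constant c ∈ ℝ with ‖Λ₁⁻¹ ∘ Λ₂ − c·id_E‖ < 1 + c. Then for every t ∈ [0,1] the operator Λ₁ + t²·Λ₂ : E → E* is invertible; in particular its kernel is trivial. -/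
/-- If `Λ₁ : E → E*` is an invertible bounded map, `Λ₂ : E → E*` is bounded, and
`‖Λ₁⁻¹ ∘ Λ₂ − c·I‖ < 1 + c` for some `c ∈ ℝ`, then `Λ₁ + t²·Λ₂` is invertible for every
`t ∈ [0,1]`; in particular its kernel is trivial. -/
theorem stmt14 {E : Type*} [NormedAddCommGroup E] [InnerProductSpace ℝ E] [CompleteSpace E]
    (Λ₁ : E ≃L[ℝ] StrongDual ℝ E) (Λ₂ : E →L[ℝ] StrongDual ℝ E) (c : ℝ)
    (h : ‖(Λ₁.symm : StrongDual ℝ E →L[ℝ] E).comp Λ₂ - c • (1 : E →L[ℝ] E)‖ < 1 + c) :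
    ∀ t ∈ Set.Icc (0 : ℝ) 1,
      (∃ e : E ≃L[ℝ] StrongDual ℝ E,
        (e : E →L[ℝ] StrongDual ℝ E)
          = (Λ₁ : E →L[ℝ] StrongDual ℝ E) + t ^ 2 • Λ₂) ∧
      LinearMap.ker (((Λ₁ : E →L[ℝ] StrongDual ℝ E) + t ^ 2 • Λ₂ : E →L[ℝ] StrongDual ℝ E) : E →ₗ[ℝ] StrongDual ℝ E) = ⊥ := by
  intro t ht
  set A : E →L[ℝ] E := (Λ₁.symm : StrongDual ℝ E →L[ℝ] E).comp Λ₂ with hA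
  have hc1 : (0:ℝ) < 1 + c := lt_of_le_of_lt (norm_nonneg _) h
  have ht0 : 0 ≤ t := ht.1
  have ht1 : t ≤ 1 := ht.2
  have ht2 : 0 ≤ t ^ 2 := sq_nonneg t
  have ht21 : t ^ 2 ≤ 1 := by nlinarith
  have hden : (0:ℝ) < 1 + c * t ^ 2 := by
    rcases le_or_gt 0 c with hc | hc
    · nlinarith
    · nlinarith
  -- key: 1 + t² • A is a unit
  set r : ℝ := t ^ 2 / (1 + c * t ^ 2) with hr
  have hrnn : 0 ≤ r := div_nonneg ht2 hden.le
  have key : (1 + c * t ^ 2) * r = t ^ 2 := by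
    rw [hr]; field_simp
  have hnorm : ‖r • (A - c • (1 : E →L[ℝ] E))‖ < 1 := by
    have hn := norm_smul r (A - c • (1 : E →L[ℝ] E))
    rw [hn, Real.norm_eq_abs, abs_of_nonneg hrnn, hr, div_mul_eq_mul_div,
      div_lt_one hden]
    nlinarith [norm_nonneg (A - c • (1 : E →L[ℝ] E))]
  have hfac : (1 : E →L[ℝ] E) + t ^ 2 • A
      = ((1 + c * t ^ 2) • (1 : E →L[ℝ] E)) * (1 - (-(r • (A - c • (1 : E →L[ℝ] E))))) := by
    rw [sub_neg_eq_add, Algebra.smul_mul_assoc, one_mul, smul_add, smul_smul, key]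
    module
  have hu1 : IsUnit ((1 + c * t ^ 2) • (1 : E →L[ℝ] E)) := by
    refine ⟨⟨(1 + c * t ^ 2) • 1, (1 + c * t ^ 2)⁻¹ • 1, ?_, ?_⟩, rfl⟩ <;>
      simp [smul_smul, mul_inv_cancel₀ hden.ne', inv_mul_cancel₀ hden.ne']
  have hu2 : IsUnit ((1 : E →L[ℝ] E) - (-(r • (A - c • (1 : E →L[ℝ] E))))) :=
    ⟨Units.oneSub _ (by simpa using hnorm), rfl⟩
  have hu : IsUnit ((1 : E →L[ℝ] E) + t ^ 2 • A) := by
    rw [hfac]; exact hu1.mul hu2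
  obtain ⟨u, hu_eq⟩ := hu
  set v : E ≃L[ℝ] E := ContinuousLinearEquiv.unitsEquiv ℝ E u with hv
  have hveq : (v : E →L[ℝ] E) = (1 : E →L[ℝ] E) + t ^ 2 • A := hu_eq
  have hcomp : (Λ₁ : E →L[ℝ] StrongDual ℝ E).comp (v : E →L[ℝ] E)
      = (Λ₁ : E →L[ℝ] StrongDual ℝ E) + t ^ 2 • Λ₂ := by
    rw [hveq]
    ext x
    simp [A]
  refine ⟨⟨v.trans Λ₁, ?_⟩, ?_⟩
  · rw [← ContinuousLinearEquiv.comp_coe]; exact hcomp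
  · rw [← hcomp]
    exact LinearMap.ker_eq_bot_of_injective (Λ₁.injective.comp v.injective)
end
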